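/- Let k' ≥ k > 0, ρ > 0, C > 0, and let K be a nonnegative integer. Let f : [k', ∞) → ℂ be measurable with |f(λ)| ≤ C λ^K for λ ∈ [k', ∞). For p ∈ ℤ define E_p^+ = ∫_{k'}^{∞} e^{−√(λ² − k²) ρ} (−i w_k(λ))^p f(λ) dλ. Then for every integer p with |p| ≥ (kρ)²/4 + 1 − K one has |E_p^+| ≤ ∫_{k'}^{∞} e^{−√(λ² − k²) ρ} |w_k(λ)^p| |f(λ)| dλ ≤ 3C (|p| + K)! (2/ρ)^{K+1} (kρ/2)^{−|p|}. -/

import Mathlib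

open MeasureTheory Filter

/-- Truncated exponential-type polynomial `S x = ∑_{i≤M} M!/i! x^i`. -/
noncomputable def EpS (M : ℕ) (x : ℝ) : ℝ :=
  ∑ i ∈ Finset.range (M + 1), x ^ i * ((M.factorial : ℝ) / (i.factorial : ℝ))

lemma EpS_continuous (M : ℕ) : Continuous (EpS M) := by
  unfold EpS
  exact continuous_finset_sum _ fun i _ => (continuous_pow i).mul continuous_const

lemma EpS_hasDerivAt (M : ℕ) (x : ℝ) :
    HasDerivAt (EpS M) (EpS M x - x ^ M) x := by
  have h : HasDerivAt (EpS M)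
      (∑ i ∈ Finset.range (M + 1),
        (i : ℝ) * x ^ (i - 1) * ((M.factorial : ℝ) / (i.factorial : ℝ))) x := by
    apply HasDerivAt.fun_sum
    intro i _
    exact (hasDerivAt_pow i x).mul_const _
  convert h using 1
  rw [Finset.sum_range_succ'
    (fun i => (i : ℝ) * x ^ (i - 1) * ((M.factorial : ℝ) / (i.factorial : ℝ)))]
  simp only [Nat.cast_zero, zero_mul, add_zero, Nat.cast_add, Nat.cast_one]
  have hterm : ∀ i ∈ Finset.range M,
      ((i : ℝ) + 1) * x ^ (i + 1 - 1) * ((M.factorial : ℝ) / ((i + 1).factorial : ℝ))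
        = x ^ i * ((M.factorial : ℝ) / (i.factorial : ℝ)) := by
    intro i _
    have hfs : ((i + 1).factorial : ℝ) = ((i : ℝ) + 1) * (i.factorial : ℝ) := by
      rw [Nat.factorial_succ]; push_cast; ring
    have h0 : (i.factorial : ℝ) ≠ 0 := Nat.cast_ne_zero.2 i.factorial_ne_zero
    have h1 : ((i : ℝ) + 1) ≠ 0 := by positivity
    rw [Nat.add_sub_cancel, hfs]
    field_simp
  rw [Finset.sum_congr rfl hterm]
  unfold EpS
  rw [Finset.sum_range_succ]
  rw [div_self (Nat.cast_ne_zero.2 M.factorial_ne_zero : ((M.factorial : ℕ) : ℝ) ≠ 0)]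
  ring

lemma EpS_le (M : ℕ) (x : ℝ) (hx : 0 ≤ x) :
    Real.exp (-x) * EpS M x ≤ (M.factorial : ℝ) := by
  have h : EpS M x ≤ (M.factorial : ℝ) * Real.exp x := by
    unfold EpS
    have := Real.sum_le_exp_of_nonneg hx (M + 1)
    calc ∑ i ∈ Finset.range (M + 1), x ^ i * ((M.factorial : ℝ) / (i.factorial : ℝ))
        = (M.factorial : ℝ) * ∑ i ∈ Finset.range (M + 1), x ^ i / (i.factorial : ℝ) := by
          rw [Finset.mul_sum]; exact Finset.sum_congr rfl fun i _ => by ring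
      _ ≤ (M.factorial : ℝ) * Real.exp x := by
          exact mul_le_mul_of_nonneg_left this (by positivity)
  calc Real.exp (-x) * EpS M x ≤ Real.exp (-x) * ((M.factorial : ℝ) * Real.exp x) :=
        mul_le_mul_of_nonneg_left h (Real.exp_pos _).le
    _ = (M.factorial : ℝ) := by
        rw [show Real.exp (-x) * ((M.factorial : ℝ) * Real.exp x)
          = (M.factorial : ℝ) * (Real.exp (-x) * Real.exp x) from by ring, ← Real.exp_add]
        simp

lemma EpS_tendsto (M : ℕ) :
    Tendsto (fun x => Real.exp (-x) * EpS M x) atTop (nhds 0) := by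
  have h : Tendsto (fun x : ℝ => ∑ i ∈ Finset.range (M + 1),
      (x ^ i * Real.exp (-x)) * ((M.factorial : ℝ) / (i.factorial : ℝ))) atTop (nhds 0) := by
    have := tendsto_finset_sum (Finset.range (M + 1))
      (fun i _ => (Real.tendsto_pow_mul_exp_neg_atTop_nhds_zero i).mul_const
        ((M.factorial : ℝ) / (i.factorial : ℝ)))
    simpa using this
  convert h using 2 with x
  unfold EpS
  rw [Finset.mul_sum]
  exact Finset.sum_congr rfl fun i _ => by ring

/-- Key elementary inequality: `e^{a/v} v^M ≤ (v+c)^M` for `v ≥ 1`, `c = 3/(2a)`,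
`M ≥ a² + 1`. -/
lemma Ep_key (a v : ℝ) (M : ℕ) (ha : 0 < a) (hv : 1 ≤ v) (hM : a ^ 2 + 1 ≤ (M : ℝ)) :
    Real.exp (a / v) * v ^ M ≤ (v + 3 / (2 * a)) ^ M := by
  set c : ℝ := 3 / (2 * a) with hc_def
  have hc : 0 < c := by positivity
  have hv0 : (0 : ℝ) < v := lt_of_lt_of_le one_pos hv
  have hvc : (0 : ℝ) < v + c := by linarith
  have h1 : a * (v + c) ≤ (M : ℝ) * c * v := by
    have h2 : a + a * c ≤ (M : ℝ) * c := by
      have hcM : (M : ℝ) * c = (M : ℝ) * 3 / (2 * a) := by rw [hc_def]; ring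
      have hac : a * c = 3 / 2 := by rw [hc_def]; field_simp
      rw [hcM, le_div_iff₀ (by positivity)]
      nlinarith [hM, sq_nonneg (a - 3 / 2)]
    nlinarith [mul_le_mul_of_nonneg_right h2 hv0.le, mul_pos ha hc]
  have h4 : Real.exp (c / (v + c)) ≤ (v + c) / v := by
    have h5 := Real.add_one_le_exp (-(c / (v + c)))
    have h6 : v / (v + c) ≤ Real.exp (-(c / (v + c))) := by
      have : v / (v + c) = -(c / (v + c)) + 1 := by field_simp; ring
      linarith [h5, this.ge]
    have h7 : (0 : ℝ) < v / (v + c) := by positivity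
    rw [Real.exp_neg] at h6
    rw [show (v + c) / v = (v / (v + c))⁻¹ by rw [inv_div]]
    calc Real.exp (c / (v + c)) = ((Real.exp (c / (v + c)))⁻¹)⁻¹ := by simp
      _ ≤ (v / (v + c))⁻¹ := by
          apply inv_anti₀ h7 h6
  have h8 : Real.exp (a / v) ≤ ((v + c) / v) ^ M := by
    calc Real.exp (a / v) ≤ Real.exp ((M : ℝ) * (c / (v + c))) := by
          apply Real.exp_le_exp.2
          rw [div_le_iff₀ hv0]
          calc a ≤ (M : ℝ) * c * v / (v + c) := by
                rw [le_div_iff₀ hvc]; nlinarith [h1]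
            _ = (M : ℝ) * (c / (v + c)) * v := by ring
      _ = Real.exp (c / (v + c)) ^ M := by
          rw [← Real.exp_nat_mul]
      _ ≤ ((v + c) / v) ^ M := by
          apply pow_le_pow_left₀ (Real.exp_pos _).le h4
  calc Real.exp (a / v) * v ^ M ≤ ((v + c) / v) ^ M * v ^ M := by
        apply mul_le_mul_of_nonneg_right h8 (by positivity)
    _ = (v + c) ^ M := by rw [div_pow]; field_simp

/-- The shifted variable `u(l) = (l + √(l²−k²))/k + c`. -/
noncomputable def EpU (k c l : ℝ) : ℝ := (l + Real.sqrt (l ^ 2 - k ^ 2)) / k + c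

/-- The comparison integrand `φ`. -/
noncomputable def EpPhi (k a c : ℝ) (M : ℕ) (l : ℝ) : ℝ :=
  a * ((1 + l / Real.sqrt (l ^ 2 - k ^ 2)) / k) *
    (Real.exp (-(a * EpU k c l)) * (a * EpU k c l) ^ M)

lemma Ep_integral (k k' a c : ℝ) (M : ℕ) (hk : 0 < k) (hkk' : k ≤ k')
    (ha : 0 < a) (hc : 0 < c) :
    IntegrableOn (EpPhi k a c M) (Set.Ioi k') ∧
      ∫ l in Set.Ioi k', EpPhi k a c M l ≤ (M.factorial : ℝ) := by
  set G : ℝ → ℝ := fun l => -(Real.exp (-(a * EpU k c l)) * EpS M (a * EpU k c l)) with hG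
  have hUcont : Continuous (EpU k c) := by
    unfold EpU
    fun_prop
  have hGcont : Continuous G := by
    rw [hG]
    exact (((continuous_const.mul hUcont).neg.rexp.mul
      ((EpS_continuous M).comp (continuous_const.mul hUcont)))).neg
  have hderiv : ∀ l ∈ Set.Ioi k', HasDerivAt G (EpPhi k a c M l) l := by
    intro l hl
    have hlk : k < l := lt_of_le_of_lt hkk' hl
    have hl0 : 0 < l := lt_trans hk hlk
    have hargpos : 0 < l ^ 2 - k ^ 2 := by nlinarith
    have hsne : l ^ 2 - k ^ 2 ≠ 0 := ne_of_gt hargpos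
    have hs : 0 < Real.sqrt (l ^ 2 - k ^ 2) := Real.sqrt_pos.2 hargpos
    set s := Real.sqrt (l ^ 2 - k ^ 2) with hs_def
    have hsq : HasDerivAt (fun y : ℝ => y ^ 2 - k ^ 2) (2 * l) l := by
      simpa using (hasDerivAt_pow 2 l).sub_const (k ^ 2)
    have hsqrt : HasDerivAt (fun y : ℝ => Real.sqrt (y ^ 2 - k ^ 2)) (l / s) l := by
      have h := (Real.hasDerivAt_sqrt hsne).comp l hsq
      refine h.congr_deriv ?_
      rw [← hs_def]
      field_simp
    have hU : HasDerivAt (EpU k c) ((1 + l / s) / k) l := by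
      unfold EpU
      exact (((hasDerivAt_id l).add hsqrt).div_const k).add_const c
    have hx : HasDerivAt (fun y => a * EpU k c y) (a * ((1 + l / s) / k)) l :=
      hU.const_mul a
    have hexp : HasDerivAt (fun y => Real.exp (-(a * EpU k c y)))
        (Real.exp (-(a * EpU k c l)) * -(a * ((1 + l / s) / k))) l := hx.neg.exp
    have hScomp : HasDerivAt (fun y => EpS M (a * EpU k c y))
        ((EpS M (a * EpU k c l) - (a * EpU k c l) ^ M) * (a * ((1 + l / s) / k))) l :=
      by have := (EpS_hasDerivAt M (a * EpU k c l)).comp l hx; exact this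
    have hmul := (hexp.mul hScomp).neg
    refine hmul.congr_deriv ?_
    unfold EpPhi
    rw [← hs_def]
    ring
  have hpos : ∀ l ∈ Set.Ioi k', 0 ≤ EpPhi k a c M l := by
    intro l hl
    have hlk : k < l := lt_of_le_of_lt hkk' hl
    have hl0 : 0 < l := lt_trans hk hlk
    have hsnn : 0 ≤ Real.sqrt (l ^ 2 - k ^ 2) := Real.sqrt_nonneg _
    unfold EpPhi
    have hU0 : 0 ≤ EpU k c l := by
      unfold EpU
      positivity
    have : 0 ≤ (1 + l / Real.sqrt (l ^ 2 - k ^ 2)) / k := by positivity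
    positivity
  have htends : Tendsto G atTop (nhds 0) := by
    have hxl : Tendsto (fun l => a * EpU k c l) atTop atTop := by
      apply tendsto_atTop_mono (f := fun l : ℝ => a * (l / k))
      · intro l
        have : l / k ≤ EpU k c l := by
          unfold EpU
          have : 0 ≤ Real.sqrt (l ^ 2 - k ^ 2) := Real.sqrt_nonneg _
          have h2 : l / k ≤ (l + Real.sqrt (l ^ 2 - k ^ 2)) / k := by
            gcongr
            linarith
          linarith
        exact mul_le_mul_of_nonneg_left this ha.le
      · exact (tendsto_id.atTop_div_const hk).const_mul_atTop ha
    have := (EpS_tendsto M).comp hxl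
    rw [hG]
    simpa using this.neg
  have hint := integrableOn_Ioi_deriv_of_nonneg hGcont.continuousWithinAt hderiv hpos htends
  have hval := integral_Ioi_of_hasDerivAt_of_nonneg hGcont.continuousWithinAt hderiv hpos htends
  refine ⟨hint, ?_⟩
  rw [hval]
  have hU0 : 0 ≤ a * EpU k c k' := by
    have hk'0 : 0 < k' := lt_of_lt_of_le hk hkk'
    have : 0 ≤ EpU k c k' := by
      unfold EpU
      positivity
    positivity
  have := EpS_le M (a * EpU k c k') hU0
  rw [hG]
  simp only [sub_neg_eq_add, zero_add]
  exact this

/-- For real `λ`, `w_k(λ) = (λ − √(λ² − k²))/k` with the nonnegative real square root. -/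
noncomputable def wkr (k l : ℝ) : ℝ := (l - Real.sqrt (l ^ 2 - k ^ 2)) / k

set_option maxHeartbeats 2000000 in
/-- Bound on `E_p^+ = ∫_{k'}^{∞} e^{−√(λ²−k²)ρ} (−i w_k(λ))^p f(λ) dλ`: for
`|p| ≥ (kρ)²/4 + 1 − K`,
`|E_p^+| ≤ ∫_{k'}^∞ e^{−√(λ²−k²)ρ}|w_k(λ)^p||f(λ)|dλ ≤ 3C(|p|+K)!(2/ρ)^{K+1}(kρ/2)^{−|p|}`. -/
theorem Ep_plus_bound (k k' ρ C : ℝ) (K : ℕ) (hk : 0 < k) (hkk' : k ≤ k')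
    (hρ : 0 < ρ) (hC : 0 < C)
    (f : ℝ → ℂ) (hf : Measurable f)
    (hfb : ∀ l : ℝ, k' ≤ l → ‖f l‖ ≤ C * l ^ K)
    (p : ℤ) (hp : (k * ρ) ^ 2 / 4 + 1 - (K : ℝ) ≤ (p.natAbs : ℝ)) :
    ‖∫ l in Set.Ioi k',
        (Real.exp (-Real.sqrt (l ^ 2 - k ^ 2) * ρ) : ℂ) *
          (-Complex.I * (wkr k l : ℂ)) ^ p * f l‖ ≤
      (∫ l in Set.Ioi k',
        Real.exp (-Real.sqrt (l ^ 2 - k ^ 2) * ρ) * |wkr k l ^ p| * ‖f l‖) ∧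
    (∫ l in Set.Ioi k',
        Real.exp (-Real.sqrt (l ^ 2 - k ^ 2) * ρ) * |wkr k l ^ p| * ‖f l‖) ≤
      3 * C * ((p.natAbs + K).factorial : ℝ) * (2 / ρ) ^ (K + 1) *
        (k * ρ / 2) ^ (-(p.natAbs : ℤ)) := by
  have hpn : -(p.natAbs : ℤ) ≤ p := by omega
  set n : ℕ := p.natAbs with hn_def
  set M : ℕ := n + K with hM_def
  obtain ⟨a, ha_def⟩ : ∃ x : ℝ, x = k * ρ / 2 := ⟨_, rfl⟩
  rw [← ha_def]
  have ha : 0 < a := by rw [ha_def]; positivity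
  obtain ⟨c, hc_def⟩ : ∃ x : ℝ, x = 3 / (2 * a) := ⟨_, rfl⟩
  have hc : 0 < c := by rw [hc_def]; positivity
  have hac : a * c = 3 / 2 := by rw [hc_def]; field_simp
  have hMr : a ^ 2 + 1 ≤ (M : ℝ) := by
    have h1 : ((M : ℝ)) = (n : ℝ) + (K : ℝ) := by rw [hM_def]; push_cast; ring
    have h2 : a ^ 2 = (k * ρ) ^ 2 / 4 := by rw [ha_def]; ring
    rw [h1, h2]
    linarith [hp]
  obtain ⟨D, hD_def⟩ : ∃ x : ℝ, x = C * k ^ (K + 1) * Real.exp (3 / 2) / (2 * a ^ (M + 1)) :=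
    ⟨_, rfl⟩
  have hD : 0 ≤ D := by rw [hD_def]; positivity
  -- pointwise norm identity for part 1
  have hpt1 : Set.EqOn
      (fun l => ‖(Real.exp (-Real.sqrt (l ^ 2 - k ^ 2) * ρ) : ℂ) *
          (-Complex.I * (wkr k l : ℂ)) ^ p * f l‖)
      (fun l => Real.exp (-Real.sqrt (l ^ 2 - k ^ 2) * ρ) * |wkr k l ^ p| * ‖f l‖)
      (Set.Ioi k') := by
    intro l hl
    have hlk : k < l := lt_of_le_of_lt hkk' hl
    have hl0 : 0 < l := lt_trans hk hlk
    have hargpos : 0 < l ^ 2 - k ^ 2 := by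
      have h2 : k ^ 2 < l ^ 2 := by
        apply pow_lt_pow_left₀ hlk hk.le
        norm_num
      linarith
    have hsl : Real.sqrt (l ^ 2 - k ^ 2) < l := by
      rw [Real.sqrt_lt' hl0]
      linarith [pow_pos hk 2]
    have hw0 : 0 < wkr k l := by
      unfold wkr
      have : 0 < l - Real.sqrt (l ^ 2 - k ^ 2) := by linarith
      positivity
    simp only
    rw [norm_mul, norm_mul, norm_zpow, norm_mul, norm_neg, Complex.norm_I, one_mul,
      Complex.norm_real, Complex.norm_real, Real.norm_eq_abs, Real.norm_eq_abs,
      abs_of_pos (Real.exp_pos _), abs_of_pos hw0,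
      abs_of_pos (zpow_pos hw0 p)]
  -- main pointwise comparison for part 2
  have hpt : ∀ l ∈ Set.Ioi k',
      Real.exp (-Real.sqrt (l ^ 2 - k ^ 2) * ρ) * |wkr k l ^ p| * ‖f l‖
        ≤ D * EpPhi k a c M l := by
    intro l hl
    have hlk : k < l := lt_of_le_of_lt hkk' hl
    have hl0 : 0 < l := lt_trans hk hlk
    have hargpos : 0 < l ^ 2 - k ^ 2 := by
      have h2 : k ^ 2 < l ^ 2 := by
        apply pow_lt_pow_left₀ hlk hk.le
        norm_num
      linarith
    set s := Real.sqrt (l ^ 2 - k ^ 2) with hs_def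
    have hs : 0 < s := Real.sqrt_pos.2 hargpos
    have hs2 : s ^ 2 = l ^ 2 - k ^ 2 := Real.sq_sqrt hargpos.le
    have hsl : s < l := by
      rw [hs_def, Real.sqrt_lt' hl0]
      linarith [pow_pos hk 2]
    set v : ℝ := (l + s) / k with hv_def
    have hv1 : 1 < v := by
      rw [hv_def, lt_div_iff₀ hk]
      linarith
    have hv0 : 0 < v := lt_trans one_pos hv1
    have hw_eq : wkr k l = (l - s) / k := by unfold wkr; rw [← hs_def]
    have hw0 : 0 < wkr k l := by
      rw [hw_eq]
      have : 0 < l - s := by linarith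
      positivity
    have hprod : (l + s) * (l - s) = k ^ 2 := by linear_combination -hs2
    have hwv : v * wkr k l = 1 := by
      rw [hw_eq, hv_def, div_mul_div_comm, hprod, ← sq]
      exact div_self (by positivity)
    have hwinv : wkr k l = v⁻¹ := eq_inv_of_mul_eq_one_left (by rw [mul_comm] at hwv; exact hwv)
    have hw1 : wkr k l ≤ 1 := by
      rw [hwinv]
      exact inv_le_one_of_one_le₀ hv1.le
    have habs : |wkr k l ^ p| = wkr k l ^ p := abs_of_pos (zpow_pos hw0 p)
    have hzle : wkr k l ^ p ≤ v ^ n := by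
      have h1 : wkr k l ^ p ≤ wkr k l ^ (-(n : ℤ)) :=
        zpow_le_zpow_right_of_le_one₀ hw0 hw1 hpn
      have h2 : wkr k l ^ (-(n : ℤ)) = v ^ n := by
        rw [hwinv, ← zpow_natCast v n]
        rw [zpow_neg, inv_zpow, inv_inv]
      rw [h2] at h1
      exact h1
    have hfl : ‖f l‖ ≤ C * l ^ K := hfb l (le_of_lt hl)
    have hlkv : l ≤ k * v := by
      have hkv : k * v = l + s := by rw [hv_def]; field_simp
      rw [hkv]
      linarith
    have hsρ : -s * ρ = a * wkr k l - a * v := by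
      rw [hw_eq, hv_def, ha_def]
      field_simp
      ring
    have hexpand : Real.exp (-s * ρ) = Real.exp (a / v) * Real.exp (-(a * v)) := by
      rw [← Real.exp_add]
      congr 1
      rw [hsρ, hwinv, div_eq_mul_inv]
      ring
    have hkey := Ep_key a v M ha hv1.le hMr
    rw [← hc_def] at hkey
    have hU_eq : EpU k c l = v + c := by
      unfold EpU
      rw [← hs_def, ← hv_def]
    -- chain of inequalities
    have step1 : Real.exp (-s * ρ) * |wkr k l ^ p| * ‖f l‖
        ≤ Real.exp (-s * ρ) * v ^ n * (C * l ^ K) := by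
      apply mul_le_mul
      · apply mul_le_mul_of_nonneg_left _ (Real.exp_pos _).le
        rw [habs]; exact hzle
      · exact hfl
      · exact norm_nonneg _
      · positivity
    have step2 : Real.exp (-s * ρ) * v ^ n * (C * l ^ K)
        ≤ C * k ^ K * (Real.exp (-(a * v)) * (v + c) ^ M) := by
      have hlK : l ^ K ≤ (k * v) ^ K := pow_le_pow_left₀ hl0.le hlkv K
      calc Real.exp (-s * ρ) * v ^ n * (C * l ^ K)
          ≤ Real.exp (-s * ρ) * v ^ n * (C * (k * v) ^ K) := by
            apply mul_le_mul_of_nonneg_left _ (by positivity)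
            exact mul_le_mul_of_nonneg_left hlK hC.le
        _ = C * k ^ K * (Real.exp (-(a * v)) * (Real.exp (a / v) * v ^ M)) := by
            rw [hexpand, hM_def, pow_add, mul_pow]
            ring
        _ ≤ C * k ^ K * (Real.exp (-(a * v)) * (v + c) ^ M) := by
            apply mul_le_mul_of_nonneg_left _ (by positivity)
            exact mul_le_mul_of_nonneg_left hkey (Real.exp_pos _).le
    have step3 : C * k ^ K * (Real.exp (-(a * v)) * (v + c) ^ M) ≤ D * EpPhi k a c M l := by
      have hphi_ge : 2 * a / k * (Real.exp (-(a * (v + c))) * (a * (v + c)) ^ M)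
          ≤ EpPhi k a c M l := by
        unfold EpPhi
        rw [hU_eq, ← hs_def]
        have hvc0 : 0 < v + c := by linarith
        have hrest : 0 ≤ Real.exp (-(a * (v + c))) * (a * (v + c)) ^ M := by positivity
        apply mul_le_mul_of_nonneg_right _ hrest
        have h2k : (2 : ℝ) ≤ 1 + l / s := by
          have : (1 : ℝ) ≤ l / s := (one_le_div hs).2 hsl.le
          linarith
        calc 2 * a / k = a * (2 / k) := by ring
          _ ≤ a * ((1 + l / s) / k) := by
              apply mul_le_mul_of_nonneg_left _ ha.le
              gcongr
      have hDcalc : D * (2 * a / k * (Real.exp (-(a * (v + c))) * (a * (v + c)) ^ M))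
          = C * k ^ K * (Real.exp (-(a * v)) * (v + c) ^ M) := by
        have hsplit : Real.exp (-(a * (v + c))) = Real.exp (-(a * v)) * Real.exp (-(3 / 2)) := by
          rw [← Real.exp_add]
          congr 1
          have : a * (v + c) = a * v + a * c := by ring
          rw [this, hac]
          ring
        have hee : Real.exp ((3 : ℝ) / 2) * Real.exp (-(3 / 2 : ℝ)) = 1 := by
          rw [← Real.exp_add]
          norm_num
        have hm32 : Real.exp (-(3 / 2 : ℝ)) = (Real.exp ((3 : ℝ) / 2))⁻¹ := by
          rw [← Real.exp_neg]
        rw [hD_def, hsplit, hm32, mul_pow a (v + c) M, pow_succ a M, pow_succ k K]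
        have hkne : (k : ℝ) ≠ 0 := ne_of_gt hk
        have hane : (a : ℝ) ≠ 0 := ne_of_gt ha
        have hene : Real.exp ((3 : ℝ) / 2) ≠ 0 := Real.exp_ne_zero _
        field_simp
      calc C * k ^ K * (Real.exp (-(a * v)) * (v + c) ^ M)
          = D * (2 * a / k * (Real.exp (-(a * (v + c))) * (a * (v + c)) ^ M)) := hDcalc.symm
        _ ≤ D * EpPhi k a c M l := mul_le_mul_of_nonneg_left hphi_ge hD
    calc Real.exp (-s * ρ) * |wkr k l ^ p| * ‖f l‖
        ≤ Real.exp (-s * ρ) * v ^ n * (C * l ^ K) := step1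
      _ ≤ C * k ^ K * (Real.exp (-(a * v)) * (v + c) ^ M) := step2
      _ ≤ D * EpPhi k a c M l := step3
  obtain ⟨hint, hIle⟩ := Ep_integral k k' a c M hk hkk' ha hc
  constructor
  · calc ‖∫ l in Set.Ioi k',
        (Real.exp (-Real.sqrt (l ^ 2 - k ^ 2) * ρ) : ℂ) *
          (-Complex.I * (wkr k l : ℂ)) ^ p * f l‖
        ≤ ∫ l in Set.Ioi k', ‖(Real.exp (-Real.sqrt (l ^ 2 - k ^ 2) * ρ) : ℂ) *
            (-Complex.I * (wkr k l : ℂ)) ^ p * f l‖ := norm_integral_le_integral_norm _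
      _ = ∫ l in Set.Ioi k',
            Real.exp (-Real.sqrt (l ^ 2 - k ^ 2) * ρ) * |wkr k l ^ p| * ‖f l‖ :=
          setIntegral_congr_fun measurableSet_Ioi hpt1
  · calc (∫ l in Set.Ioi k',
        Real.exp (-Real.sqrt (l ^ 2 - k ^ 2) * ρ) * |wkr k l ^ p| * ‖f l‖)
        ≤ ∫ l in Set.Ioi k', D * EpPhi k a c M l := by
          apply integral_mono_of_nonneg
          · exact Filter.Eventually.of_forall fun l => by positivity
          · exact hint.const_mul D
          · rw [Filter.EventuallyLE, ae_restrict_iff' measurableSet_Ioi]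
            exact Filter.Eventually.of_forall hpt
      _ = D * ∫ l in Set.Ioi k', EpPhi k a c M l := integral_const_mul D _
      _ ≤ D * (M.factorial : ℝ) := mul_le_mul_of_nonneg_left hIle hD
      _ ≤ 3 * C * (M.factorial : ℝ) * (2 / ρ) ^ (K + 1) * a ^ (-(n : ℤ)) := by
          have hzpow : (a : ℝ) ^ (-(n : ℤ)) = (a ^ n)⁻¹ := by
            rw [zpow_neg, zpow_natCast]
          have h2ρ : (2 : ℝ) / ρ = k / a := by
            rw [ha_def]
            field_simp
          have hpow : a ^ (M + 1) = a ^ n * a ^ (K + 1) := by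
            rw [hM_def]
            ring
          have hexp6 : Real.exp ((3 : ℝ) / 2) ≤ 6 := by
            have h3 : Real.exp ((3 : ℝ) / 2) ^ 2 = Real.exp 3 := by
              rw [sq, ← Real.exp_add]; norm_num
            have h5 : Real.exp (3 : ℝ) = Real.exp 1 ^ 3 := by
              rw [← Real.exp_nat_mul]; norm_num
            have h6 := Real.exp_one_lt_d9
            have h7 : Real.exp 1 ^ 3 < (2.7182818286 : ℝ) ^ 3 := by
              apply pow_lt_pow_left₀ h6 (Real.exp_pos 1).le
              norm_num
            have h8 : Real.exp (3 : ℝ) < 36 := by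
              rw [h5]
              calc Real.exp 1 ^ 3 < (2.7182818286 : ℝ) ^ 3 := h7
                _ < 36 := by norm_num
            nlinarith [h3, h8, Real.exp_pos ((3 : ℝ) / 2)]
          have hB : (0 : ℝ) ≤ C * (M.factorial : ℝ) * k ^ (K + 1) / (a ^ (K + 1) * a ^ n) := by
            positivity
          calc D * (M.factorial : ℝ)
              = C * (M.factorial : ℝ) * k ^ (K + 1) / (a ^ (K + 1) * a ^ n)
                  * (Real.exp (3 / 2) / 2) := by
                rw [hD_def, hpow]
                field_simp
            _ ≤ C * (M.factorial : ℝ) * k ^ (K + 1) / (a ^ (K + 1) * a ^ n) * 3 :=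
                mul_le_mul_of_nonneg_left (by linarith) hB
            _ = 3 * C * (M.factorial : ℝ) * (2 / ρ) ^ (K + 1) * a ^ (-(n : ℤ)) := by
                rw [h2ρ, hzpow, div_pow]
                field_simp
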